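/- Let p be a probability vector on [K] with all entries positive, let Φ be a K×K matrix with nonnegative entries, and let Π_{[i,j]} be the permutation matrix swapping coordinates i and j (i ≠ j). Then the function λ ↦ q(λ)·Φ·q(λ)^{−T}, where q(λ) = λp + (1−λ)pΠ_{[i,j]} and q^{−T} denotes the column vector of entrywise reciprocals of q, is convex on [0,1]. -/

import Mathlib

open Finset Filter Asymptotics

namespace RRStmt

def simplex (K : ℕ) : Set (Fin K → ℝ) :=
  {p | (∀ k, 0 ≤ p k) ∧ ∑ k, p k = 1}

def simplexBoundary (K : ℕ) : Set (Fin K → ℝ) :=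
  {p | p ∈ simplex K ∧ ∃ k, p k = 0}

/-- Kullback–Leibler divergence between two vectors on `Fin K`. -/
noncomputable def KL {K : ℕ} (u v : Fin K → ℝ) : ℝ :=
  ∑ k, u k * Real.log (u k / v k)

/-- Boundary information projection `D(∂ℙW ‖ pW)`. -/
noncomputable def Dbnd {K : ℕ} (p : Fin K → ℝ) (W : Matrix (Fin K) (Fin K) ℝ) : ℝ :=
  sInf ((fun r => KL (Matrix.vecMul r W) (Matrix.vecMul p W)) '' simplexBoundary K)

/-- Empirical distribution (type) of a sample sequence. -/
noncomputable def empDist {K n : ℕ} (y : Fin n → Fin K) : Fin K → ℝ :=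
  fun k => ((Finset.univ.filter fun i => y i = k).card : ℝ) / n

/-- Expectation of `g` under `n` i.i.d. samples with distribution `q`. -/
noncomputable def iidE {K : ℕ} (q : Fin K → ℝ) (n : ℕ) (g : (Fin n → Fin K) → ℝ) : ℝ :=
  ∑ y : Fin n → Fin K, (∏ i, q (y i)) * g y

open Classical in
/-- Probability of event `E` under `n` i.i.d. samples with distribution `q`. -/
noncomputable def iidP {K : ℕ} (q : Fin K → ℝ) (n : ℕ) (E : Set (Fin n → Fin K)) : ℝ :=
  ∑ y : Fin n → Fin K, if y ∈ E then ∏ i, q (y i) else 0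

def RowStochastic {K : ℕ} (W : Matrix (Fin K) (Fin K) ℝ) : Prop :=
  (∀ i j, 0 ≤ W i j) ∧ ∀ i, ∑ j, W i j = 1

def EpsPrivate {K : ℕ} (ε : ℝ) (W : Matrix (Fin K) (Fin K) ℝ) : Prop :=
  ∀ k k' l, W k l ≤ Real.exp ε * W k' l

def IsCirculant {K : ℕ} (W : Matrix (Fin K) (Fin K) ℝ) : Prop :=
  ∃ w : Fin K → ℝ, ∀ i j, W i j = w (j - i)

def IsPermMatrix {K : ℕ} (W : Matrix (Fin K) (Fin K) ℝ) : Prop :=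
  ∃ σ : Equiv.Perm (Fin K), ∀ i j, W i j = if σ i = j then 1 else 0

noncomputable def nu {K : ℕ} (p : Fin K → ℝ) (W : Matrix (Fin K) (Fin K) ℝ)
    (ρ : ℕ) (k : Fin K) : ℝ :=
  ∑ j, Matrix.vecMul p W j * (W⁻¹ j k) ^ ρ

noncomputable def Phi {K : ℕ} (W : Matrix (Fin K) (Fin K) ℝ) : Matrix (Fin K) (Fin K) ℝ :=
  W * Matrix.hadamard W⁻¹ W⁻¹

noncomputable def phiSum {K : ℕ} (W : Matrix (Fin K) (Fin K) ℝ) : ℝ :=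
  ∑ k, ∑ l, Phi W k l

noncomputable def stepMech (K : ℕ) (ε : ℝ) : Matrix (Fin K) (Fin K) ℝ :=
  Matrix.of fun i j => if i = j then Real.exp ε / (Real.exp ε + K - 1)
                       else 1 / (Real.exp ε + K - 1)



lemma convexOn_finsum {ι : Type*} (t : Finset ι) {s : Set ℝ} (hs : Convex ℝ s)
    (f : ι → ℝ → ℝ) (h : ∀ i ∈ t, ConvexOn ℝ s (f i)) :
    ConvexOn ℝ s fun x => ∑ i ∈ t, f i x := by
  classical
  induction t using Finset.induction with
  | empty => simpa using convexOn_const (0 : ℝ) hs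
  | insert _ _ hnot ih =>
    simp only [Finset.sum_insert hnot]
    exact (h _ (Finset.mem_insert_self _ _)).add
      (ih fun i hi => h i (Finset.mem_insert_of_mem hi))

lemma seg_pos {D0 D1 l : ℝ} (hD0 : 0 < D0) (hD1 : 0 < D1) (hl : l ∈ Set.Icc (0:ℝ) 1) :
    0 < l * D1 + (1 - l) * D0 := by
  rcases le_or_gt D0 D1 with h | h
  · nlinarith [mul_nonneg hl.1 (sub_nonneg.2 h)]
  · nlinarith [mul_nonneg (sub_nonneg.2 hl.2) (sub_nonneg.2 h.le)]

lemma aux_inv (a b c : ℝ) (hc : 0 ≤ c) (hb : 0 < b) (hab : 0 < a + b) :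
    ConvexOn ℝ (Set.Icc (0 : ℝ) 1) (fun l => c / (a * l + b)) := by
  have h1 : ConvexOn ℝ (Set.Ioi (0 : ℝ)) (fun x : ℝ => c * x⁻¹) := by
    simpa [zpow_neg, smul_eq_mul] using (convexOn_zpow (-1 : ℤ)).smul hc
  have h2 := h1.comp_affineMap (AffineMap.lineMap (b : ℝ) (a + b))
  have h3 : Set.Icc (0 : ℝ) 1 ⊆ (AffineMap.lineMap (b : ℝ) (a + b)) ⁻¹' Set.Ioi 0 := by
    intro l hl
    simp only [Set.mem_preimage, AffineMap.lineMap_apply, Set.mem_Ioi, smul_eq_mul,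
      vsub_eq_sub, vadd_eq_add]
    have := seg_pos hb hab hl
    nlinarith [this]
  have h4 := h2.subset h3 (convex_Icc 0 1)
  refine h4.congr fun l hl => ?_
  simp only [Function.comp, AffineMap.lineMap_apply, smul_eq_mul, vsub_eq_sub, vadd_eq_add]
  rw [div_eq_mul_inv]
  ring_nf

lemma aux_affine (e f : ℝ) (s : Set ℝ) (hs : Convex ℝ s) :
    ConvexOn ℝ s (fun l => e * l + f) := by
  have := (LinearMap.convexOn (e • (LinearMap.id : ℝ →ₗ[ℝ] ℝ)) hs).add_const f
  exact this.congr fun x _ => by simp [smul_eq_mul]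

lemma term_convex (N0 N1 D0 D1 Φv : ℝ) (hN0 : 0 ≤ N0) (hD0 : 0 < D0) (hD1 : 0 < D1)
    (hΦ : 0 ≤ Φv) (hcross : (D1 - D0) * (N1 * D0 - N0 * D1) ≤ 0) :
    ConvexOn ℝ (Set.Icc (0 : ℝ) 1)
      (fun l => (l * N1 + (1 - l) * N0) * Φv / (l * D1 + (1 - l) * D0)) := by
  by_cases hγ : D1 - D0 = 0
  · have hD : D1 = D0 := by linarith
    have conv := (aux_inv 0 D0 (N0 * Φv) (mul_nonneg hN0 hΦ) hD0 (by linarith)).add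
      (aux_affine ((N1 - N0) * Φv / D0) 0 _ (convex_Icc 0 1))
    refine conv.congr fun l hl => ?_
    have hne : l * D1 + (1 - l) * D0 ≠ 0 := (seg_pos hD0 hD1 hl).ne'
    subst hD
    simp only [Pi.add_apply]
    field_simp [hD0.ne']
    ring
  · set c : ℝ := Φv * (N0 * D1 - N1 * D0) / (D1 - D0) with hc_def
    have hc : 0 ≤ c := by
      rcases lt_or_gt_of_ne hγ with h | h
      · refine div_nonneg_iff.mpr (Or.inr ⟨?_, h.le⟩)
        have h1 : N0 * D1 - N1 * D0 ≤ 0 := by nlinarith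
        exact mul_nonpos_of_nonneg_of_nonpos hΦ h1
      · refine div_nonneg_iff.mpr (Or.inl ⟨?_, h.le⟩)
        have h1 : 0 ≤ N0 * D1 - N1 * D0 := by nlinarith
        exact mul_nonneg hΦ h1
    have conv := (aux_inv (D1 - D0) D0 c hc hD0 (by linarith)).add
      (aux_affine 0 ((N1 - N0) * Φv / (D1 - D0)) _ (convex_Icc 0 1))
    refine conv.congr fun l hl => ?_
    have hne : l * D1 + (1 - l) * D0 ≠ 0 := (seg_pos hD0 hD1 hl).ne'
    have hne2 : (D1 - D0) * l + D0 ≠ 0 := by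
      rw [show (D1 - D0) * l + D0 = l * D1 + (1 - l) * D0 by ring]; exact hne
    simp only [hc_def, Pi.add_apply]
    rw [show l * D1 + (1 - l) * D0 = (D1 - D0) * l + D0 by ring]
    field_simp [hne2, hγ]
    ring

/-- convexity of `λ ↦ q(λ)·Φ·q(λ)^{−T}` along a transposition segment. -/
theorem stmt_13 (K : ℕ) (hK : 2 ≤ K)
    (p : Fin K → ℝ) (hp : ∀ k, 0 < p k) (hpsum : ∑ k, p k = 1)
    (Φ : Matrix (Fin K) (Fin K) ℝ) (hΦ : ∀ k l, 0 ≤ Φ k l)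
    (i j : Fin K) (hij : i ≠ j) :
    ConvexOn ℝ (Set.Icc (0 : ℝ) 1)
      (fun l : ℝ => ∑ k, ∑ m,
        (l * p k + (1 - l) * p (Equiv.swap i j k)) * Φ k m /
          (l * p m + (1 - l) * p (Equiv.swap i j m))) := by
  have hσ := Equiv.swap_apply_def i j
  refine convexOn_finsum Finset.univ (convex_Icc 0 1) _ fun k _ => ?_
  refine convexOn_finsum Finset.univ (convex_Icc 0 1) _ fun m _ => ?_
  refine term_convex (p (Equiv.swap i j k)) (p k) (p (Equiv.swap i j m)) (p m) (Φ k m)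
    (hp _).le (hp _) (hp _) (hΦ k m) ?_
  rcases eq_or_ne m i with rfl | hmi
  · rw [Equiv.swap_apply_left]
    rcases eq_or_ne k m with rfl | hki
    · rw [Equiv.swap_apply_left]; nlinarith [sq_nonneg (p k - p j)]
    rcases eq_or_ne k j with rfl | hkj
    · rw [Equiv.swap_apply_right]
      nlinarith [sq_nonneg (p m - p k), (hp m).le, (hp k).le]
    · rw [Equiv.swap_apply_of_ne_of_ne hki hkj]
      nlinarith [sq_nonneg (p m - p j), (hp k).le]
  rcases eq_or_ne m j with rfl | hmj
  · rw [Equiv.swap_apply_right]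
    rcases eq_or_ne k i with rfl | hki
    · rw [Equiv.swap_apply_left]
      nlinarith [sq_nonneg (p k - p m), (hp k).le, (hp m).le]
    rcases eq_or_ne k m with rfl | hkj
    · rw [Equiv.swap_apply_right]; nlinarith [sq_nonneg (p i - p k)]
    · rw [Equiv.swap_apply_of_ne_of_ne hki hkj]
      nlinarith [sq_nonneg (p m - p i), (hp k).le]
  · rw [Equiv.swap_apply_of_ne_of_ne hmi hmj]
    nlinarith

end RRStmt
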